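/- With β(t) = q(1−q)(μ²/ς²)·sinh(β₂t/2) / (β₂·cosh(β₂t/2) + β₁·sinh(β₂t/2)), one has 0 ≤ β(t) ≤ B for every t ≥ 0, and β(t) → B as t → ∞. -/

import Mathlib

open Filter Topology

lemma tanh_tendsto_one' : Tendsto Real.tanh atTop (𝓝 1) := by
  have h : ∀ x, Real.tanh x = (1 - Real.exp (-(2*x)))/(1 + Real.exp (-(2*x))) := by
    intro x
    have he := Real.exp_pos x
    have he2 := Real.exp_pos (-(2*x))
    rw [Real.tanh_eq_sinh_div_cosh, Real.sinh_eq, Real.cosh_eq,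
        show -(2*x) = -x + -x by ring, Real.exp_add, Real.exp_neg]
    field_simp
  have h0 : Tendsto (fun x => Real.exp (-(2*x))) atTop (𝓝 0) :=
    Real.tendsto_exp_atBot.comp
      (tendsto_neg_atTop_atBot.comp (tendsto_id.const_mul_atTop two_pos))
  have h1 : Tendsto (fun x => (1 - Real.exp (-(2*x)))/(1 + Real.exp (-(2*x)))) atTop
      (𝓝 ((1-0)/(1+0))) :=
    Tendsto.div (tendsto_const_nhds.sub h0) (tendsto_const_nhds.add h0) (by norm_num)
  simpa using h1.congr (fun x => (h x).symm)

set_option maxHeartbeats 1600000 in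
/-- Heston model: the Riccati solution `β` satisfies `0 ≤ β(t) ≤ B` for all `t ≥ 0`, and
`β(t) → B` as `t → ∞`. -/
theorem stmt11 (k m μ ς σ ρ q : ℝ)
    (hk : 0 < k) (hm : 0 < m) (hμ : μ ≠ 0) (hς : 0 < ς) (hσ : 0 < σ)
    (hρ : ρ ∈ Set.Ioo (-1 : ℝ) 1) (hq : q ∈ Set.Ioo (0 : ℝ) 1)
    (β₁ β₂ B : ℝ)
    (hβ₁ : β₁ = k + q * μ * ρ * σ / ς)
    (hβ₂ : β₂ = Real.sqrt (β₁ ^ 2 + q * (1 - q * ρ ^ 2) * μ ^ 2 * σ ^ 2 / ς ^ 2))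
    (hB : B = (1 - q) * (β₂ - β₁) / ((1 - q * ρ ^ 2) * σ ^ 2))
    (β : ℝ → ℝ)
    (hβ : ∀ t, β t = q * (1 - q) * (μ ^ 2 / ς ^ 2) * Real.sinh (β₂ * t / 2) /
        (β₂ * Real.cosh (β₂ * t / 2) + β₁ * Real.sinh (β₂ * t / 2))) :
    (∀ t ≥ (0 : ℝ), 0 ≤ β t ∧ β t ≤ B) ∧
    Tendsto β atTop (𝓝 B) := by
  obtain ⟨hq0, hq1⟩ := hq
  obtain ⟨hρ1, hρ2⟩ := hρ
  have hρsq : ρ ^ 2 < 1 := by nlinarith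
  have hqρ : q * ρ ^ 2 < 1 := by nlinarith [sq_nonneg ρ]
  have h1qρ : (0:ℝ) < 1 - q * ρ ^ 2 := by linarith
  have hμ2 : 0 < μ ^ 2 := by positivity
  have hc : 0 < q * (1 - q * ρ ^ 2) * μ ^ 2 * σ ^ 2 / ς ^ 2 := by
    apply div_pos _ (by positivity)
    exact mul_pos (mul_pos (mul_pos hq0 h1qρ) hμ2) (by positivity)
  have hβ₂sq : β₂ ^ 2 = β₁ ^ 2 + q * (1 - q * ρ ^ 2) * μ ^ 2 * σ ^ 2 / ς ^ 2 := by
    rw [hβ₂, Real.sq_sqrt]; nlinarith [sq_nonneg β₁]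
  have hβ₂pos : 0 < β₂ := by
    rw [hβ₂]; apply Real.sqrt_pos.mpr; nlinarith [sq_nonneg β₁]
  have hsum : 0 < β₁ + β₂ := by nlinarith
  have hApos : 0 < q * (1 - q) * (μ ^ 2 / ς ^ 2) := by
    apply mul_pos (mul_pos hq0 (by linarith)); positivity
  have hBA : B = q * (1 - q) * (μ ^ 2 / ς ^ 2) / (β₁ + β₂) := by
    rw [hB, div_eq_div_iff (by positivity) hsum.ne']
    have hcc : (β₂ - β₁) * (β₁ + β₂) * ς ^ 2 = q * (1 - q * ρ ^ 2) * μ ^ 2 * σ ^ 2 := by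
      field_simp at hβ₂sq
      linear_combination hβ₂sq
    field_simp
    linear_combination hcc
  have hD : ∀ t : ℝ, 0 ≤ t →
      0 < β₂ * Real.cosh (β₂ * t / 2) + β₁ * Real.sinh (β₂ * t / 2) := by
    intro t ht
    have hs : 0 ≤ Real.sinh (β₂ * t / 2) := Real.sinh_nonneg_iff.mpr (div_nonneg (mul_nonneg hβ₂pos.le ht) two_pos.le)
    have hch : Real.sinh (β₂ * t / 2) < Real.cosh (β₂ * t / 2) := Real.sinh_lt_cosh _
    nlinarith [mul_nonneg hsum.le hs]
  constructor
  · intro t ht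
    have hDt := hD t ht
    have hs : 0 ≤ Real.sinh (β₂ * t / 2) := Real.sinh_nonneg_iff.mpr (div_nonneg (mul_nonneg hβ₂pos.le ht) two_pos.le)
    have hch : Real.sinh (β₂ * t / 2) < Real.cosh (β₂ * t / 2) := Real.sinh_lt_cosh _
    refine ⟨?_, ?_⟩
    · rw [hβ t]
      exact div_nonneg (mul_nonneg hApos.le hs) hDt.le
    · rw [hβ t, hBA, div_le_div_iff₀ hDt hsum]
      nlinarith [mul_nonneg (mul_nonneg hApos.le hβ₂pos.le) (sub_pos.mpr hch).le]
  · have hx : Tendsto (fun t : ℝ => β₂ * t / 2) atTop atTop :=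
      (tendsto_id.const_mul_atTop hβ₂pos).atTop_div_const two_pos
    have hT : Tendsto (fun t : ℝ => Real.tanh (β₂ * t / 2)) atTop (𝓝 1) :=
      tanh_tendsto_one'.comp hx
    have hden : Tendsto (fun t : ℝ => β₂ + β₁ * Real.tanh (β₂ * t / 2)) atTop
        (𝓝 (β₂ + β₁ * 1)) := tendsto_const_nhds.add (tendsto_const_nhds.mul hT)
    have hfin : Tendsto (fun t : ℝ => q * (1 - q) * (μ ^ 2 / ς ^ 2) * Real.tanh (β₂ * t / 2) /
        (β₂ + β₁ * Real.tanh (β₂ * t / 2))) atTop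
        (𝓝 (q * (1 - q) * (μ ^ 2 / ς ^ 2) * 1 / (β₂ + β₁ * 1))) :=
      Tendsto.div (tendsto_const_nhds.mul hT) hden (by rw [mul_one]; exact ne_of_gt (by linarith))
    have hval : q * (1 - q) * (μ ^ 2 / ς ^ 2) * 1 / (β₂ + β₁ * 1) = B := by
      rw [hBA]; ring_nf
    rw [← hval]
    apply hfin.congr'
    filter_upwards [eventually_ge_atTop (0:ℝ)] with t ht
    have hDt := hD t ht
    have hchpos : 0 < Real.cosh (β₂ * t / 2) := Real.cosh_pos _
    rw [hβ t, Real.tanh_eq_sinh_div_cosh]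
    field_simp
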